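/- Let r₀ > 1 and s ≥ s₃ > 0 be real numbers. Then there exists a constant C > 0, depending only on r₀, s and s₃, such that for all real r > 0 and a, b ≥ 0 satisfying a² + b² > r₀⁻¹ and r·r₀⁻¹/((r₀⁻¹ + a)² + b²) ≤ s, one has r·t⁻¹/((t⁻¹ + a)² + b²) ≤ s₃ for every t ≥ C. -/

import Mathlib

/-- Real-variable content of Lemma 7.1 (maxexists), big Bruhat cell case: for `r₀ > 1`
and `s ≥ s₃ > 0` there is `C > 0`, depending only on `r₀, s, s₃`, such that whenever
`r > 0` and `a, b ≥ 0` satisfy `a² + b² > r₀⁻¹` and `r·r₀⁻¹/((r₀⁻¹ + a)² + b²) ≤ s`,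
the height `r·t⁻¹/((t⁻¹ + a)² + b²)` is at most `s₃` for all `t ≥ C`. -/
theorem descent_time_bounded (r₀ s s₃ : ℝ) (hr₀ : 1 < r₀) (hs : s₃ ≤ s) (hs₃ : 0 < s₃) :
    ∃ C > (0 : ℝ), ∀ r a b : ℝ, 0 < r → 0 ≤ a → 0 ≤ b →
      a ^ 2 + b ^ 2 > r₀⁻¹ →
      r * r₀⁻¹ / ((r₀⁻¹ + a) ^ 2 + b ^ 2) ≤ s →
      ∀ t : ℝ, C ≤ t → r * t⁻¹ / ((t⁻¹ + a) ^ 2 + b ^ 2) ≤ s₃ := by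
  have hr₀0 : (0:ℝ) < r₀ := lt_trans one_pos hr₀
  have hsp : (0:ℝ) < s := lt_of_lt_of_le hs₃ hs
  refine ⟨4 * s * r₀ / s₃, by positivity, ?_⟩
  intro r a b hr ha hb hab h2 t ht
  have hC : (0:ℝ) < 4 * s * r₀ / s₃ := by positivity
  have htp : (0:ℝ) < t := lt_of_lt_of_le hC ht
  have hinv : (0:ℝ) < r₀⁻¹ := by positivity
  have hD1 : (0:ℝ) < (r₀⁻¹ + a) ^ 2 + b ^ 2 := by positivity
  have habp : (0:ℝ) < a ^ 2 + b ^ 2 := lt_trans hinv hab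
  have hD2 : (0:ℝ) < (t⁻¹ + a) ^ 2 + b ^ 2 := by positivity
  -- from hypothesis 2
  have hr1 : r * r₀⁻¹ ≤ s * ((r₀⁻¹ + a) ^ 2 + b ^ 2) := by
    rwa [div_le_iff₀ hD1] at h2
  have hrle : r ≤ s * r₀ * ((r₀⁻¹ + a) ^ 2 + b ^ 2) := by
    have := mul_le_mul_of_nonneg_right hr1 (le_of_lt hr₀0)
    have hinvr : r₀⁻¹ * r₀ = 1 := inv_mul_cancel₀ (ne_of_gt hr₀0)
    nlinarith
  -- D1 ≤ 4 (a²+b²)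
  have hd1le : (r₀⁻¹ + a) ^ 2 + b ^ 2 ≤ 4 * (a ^ 2 + b ^ 2) := by
    have h1 : r₀⁻¹ * r₀⁻¹ < a ^ 2 + b ^ 2 := by
      have : r₀⁻¹ < 1 := inv_lt_one_of_one_lt₀ hr₀
      nlinarith
    nlinarith [sq_nonneg (r₀⁻¹ - a)]
  have hrle4 : r ≤ 4 * s * r₀ * (a ^ 2 + b ^ 2) := by nlinarith
  -- t⁻¹ ≤ s₃/(4 s r₀)
  have htinv : t⁻¹ ≤ s₃ / (4 * s * r₀) := by
    have h1 : t⁻¹ ≤ (4 * s * r₀ / s₃)⁻¹ := by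
      exact inv_anti₀ hC ht
    rwa [inv_div] at h1
  rw [div_le_iff₀ hD2]
  have htinv0 : (0:ℝ) ≤ t⁻¹ := le_of_lt (by positivity)
  have key : r * t⁻¹ ≤ s₃ * (a ^ 2 + b ^ 2) := by
    calc r * t⁻¹ ≤ (4 * s * r₀ * (a ^ 2 + b ^ 2)) * (s₃ / (4 * s * r₀)) := by
          apply mul_le_mul hrle4 htinv htinv0 (by positivity)
      _ = s₃ * (a ^ 2 + b ^ 2) := by field_simp
  have hmono : s₃ * (a ^ 2 + b ^ 2) ≤ s₃ * ((t⁻¹ + a) ^ 2 + b ^ 2) := by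
    apply mul_le_mul_of_nonneg_left _ (le_of_lt hs₃)
    have hsq : a ^ 2 ≤ (t⁻¹ + a) ^ 2 := by
      apply pow_le_pow_left₀ ha (by linarith)
    linarith
  linarith
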